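/- arXiv:1902.02260 — 3 statements merged into one kernel-verified Lean document; each statement's English description precedes it below -/
import Mathlib

section
/- Let A be an n×n complex matrix, let z ∈ ℂⁿ be a right singular vector of A corresponding to a singular value σ > 0 (i.e., ‖z‖ = 1 and A*Az = σ²z), let b ∈ ℂⁿ, let x be the exact solution of Ax = b, and let x0 ∈ ℂⁿ. Then the scalar α = ⟨b − Ax0, Az⟩/‖Az‖², which is the unique minimizer over k ∈ ℂ of ‖b − Ax0 − kAz‖, also minimizes ‖x − x0 − kz‖ over k ∈ ℂ; that is, for every k ∈ ℂ, ‖x − x0 − αz‖ ≤ ‖x − x0 − kz‖. -/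
open Matrix

/-- **Lemma 1.** Let `z` be a right singular vector of the `n × n` complex matrix `A`
corresponding to the singular value `σ > 0` (i.e. `‖z‖ = 1` and `AᴴA z = σ² z`), let `x` be
the exact solution of `A x = b`, and let `x0` be any approximate solution.  Then the scalar
`α = ⟨b - A x0, A z⟩ / ‖A z‖²`, the minimizer of `‖b - A x0 - k • A z‖` over `k ∈ ℂ`, also
minimizes `‖x - x0 - k • z‖` over `k ∈ ℂ`. -/
theorem gmres_sv_lemma1 (n : ℕ) (A : Matrix (Fin n) (Fin n) ℂ)
    (z b x x0 : EuclideanSpace ℂ (Fin n)) (σ : ℝ) (hσ : 0 < σ)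
    (hz : ‖z‖ = 1)
    (hsv : Matrix.toEuclideanLin (Aᴴ * A) z = ((σ : ℂ) ^ 2) • z)
    (hx : Matrix.toEuclideanLin A x = b)
    (α : ℂ)
    (hα : α = (inner ℂ (Matrix.toEuclideanLin A z) (b - Matrix.toEuclideanLin A x0) : ℂ) /
      (‖Matrix.toEuclideanLin A z‖ : ℂ) ^ 2) :
    ∀ k : ℂ, ‖x - x0 - α • z‖ ≤ ‖x - x0 - k • z‖ := by
  intro k
  set T := Matrix.toEuclideanLin A with hT
  set v := x - x0 with hv
  have hσ2 : ((σ : ℂ))^2 ≠ 0 := by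
    simp [hσ.ne']
  have hcomp : ∀ w : EuclideanSpace ℂ (Fin n),
      (inner ℂ (T z) (T w) : ℂ) = (σ : ℂ)^2 * inner ℂ z w := by
    intro w
    have h1 : (inner ℂ (T z) (T w) : ℂ) = inner ℂ (Matrix.toEuclideanLin (Aᴴ * A) z) w := by
      have hc : Matrix.toEuclideanLin (Aᴴ * A) = (Matrix.toEuclideanLin Aᴴ) ∘ₗ T := by
        rw [hT]
        simp only [Matrix.toEuclideanLin_eq_toLin]
        exact Matrix.toLin_mul _ _ _ Aᴴ A
      rw [hc]
      simp only [LinearMap.comp_apply]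
      rw [Matrix.toEuclideanLin_conjTranspose_eq_adjoint, LinearMap.adjoint_inner_left]
    rw [h1, hsv, inner_smul_left]
    norm_num
  have hzz : (inner ℂ z z : ℂ) = 1 := by
    rw [inner_self_eq_norm_sq_to_K, hz]; norm_num
  have hnormTz : ((‖T z‖ : ℂ))^2 = (σ : ℂ)^2 := by
    have h2 : (inner ℂ (T z) (T z) : ℂ) = ((‖T z‖ : ℂ))^2 := by
      rw [inner_self_eq_norm_sq_to_K]; norm_cast
    rw [← h2, hcomp z, hzz, mul_one]
  have hαval : α = inner ℂ z v := by
    have hb : b - T x0 = T v := by rw [← hx, hv, map_sub]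
    rw [hα, hb, hcomp v, hnormTz]
    field_simp [Complex.ofReal_ne_zero.mpr hσ.ne']
  -- orthogonality
  have horth : (inner ℂ ((α - k) • z) (v - α • z) : ℂ) = 0 := by
    rw [inner_smul_left, inner_sub_right, inner_smul_right, hzz, hαval, mul_one, sub_self,
      mul_zero]
  have hdecomp : x - x0 - k • z = ((α - k) • z) + (v - α • z) := by
    rw [hv]; module
  have h1 : x - x0 - α • z = v - α • z := by rw [hv]
  rw [h1, hdecomp]
  have hsq := norm_add_sq_eq_norm_sq_add_norm_sq_of_inner_eq_zero _ _ horth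
  nlinarith [norm_nonneg ((α - k) • z), norm_nonneg (v - α • z),
    norm_nonneg (((α - k) • z) + (v - α • z))]
end

section
/- Let A be an n×n complex matrix, let Vₘ be an n×m complex matrix with orthonormal columns (Vₘ*Vₘ = I), let b ∈ ℂⁿ, let x be the exact solution of Ax = b, and let x0 ∈ ℂⁿ be such that x − x0 lies in the range (column space) of Vₘ. Let z ∈ ℂᵐ be a right singular vector of AVₘ corresponding to a singular value σ > 0, i.e., ‖z‖ = 1 and Vₘ*A*AVₘz = σ²z. Then the scalar α = ⟨b − Ax0, AVₘz⟩/‖AVₘz‖², which is the unique minimizer over k ∈ ℂ of ‖b − Ax0 − kAVₘz‖, also minimizes ‖x − x0 − kVₘz‖ over k ∈ ℂ; that is, for every k ∈ ℂ, ‖x − x0 − αVₘz‖ ≤ ‖x − x0 − kVₘz‖. -/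
open Matrix

lemma toEuclideanLin_mul_apply {p q r : ℕ} (M : Matrix (Fin p) (Fin q) ℂ)
    (N : Matrix (Fin q) (Fin r) ℂ) (v : EuclideanSpace ℂ (Fin r)) :
    Matrix.toEuclideanLin (M * N) v = Matrix.toEuclideanLin M (Matrix.toEuclideanLin N v) := by
  simp [Matrix.toEuclideanLin_apply, Matrix.mulVec_mulVec]

lemma inner_toEuclideanLin_left {p q : ℕ} (M : Matrix (Fin p) (Fin q) ℂ)
    (a : EuclideanSpace ℂ (Fin q)) (b : EuclideanSpace ℂ (Fin p)) :
    (inner ℂ (Matrix.toEuclideanLin M a) b : ℂ) = inner ℂ a (Matrix.toEuclideanLin Mᴴ b) := by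
  rw [Matrix.toEuclideanLin_conjTranspose_eq_adjoint, LinearMap.adjoint_inner_right]

/-- **Theorem 3.1.** Let `Vₘ` have orthonormal columns (`Vₘᴴ Vₘ = I`), let `x` solve `A x = b`,
and suppose `x - x0` lies in the range of `Vₘ`.  If `z` is a right singular vector of `A Vₘ`
for the singular value `σ > 0` (i.e. `‖z‖ = 1` and `Vₘᴴ Aᴴ A Vₘ z = σ² z`), then the scalar
`α = ⟨b - A x0, A Vₘ z⟩ / ‖A Vₘ z‖²`, the minimizer of `‖b - A x0 - k • A Vₘ z‖` over `k ∈ ℂ`,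
also minimizes `‖x - x0 - k • Vₘ z‖` over `k ∈ ℂ`. -/
theorem gmres_sv_theorem1 (n m : ℕ) (A : Matrix (Fin n) (Fin n) ℂ)
    (Vm : Matrix (Fin n) (Fin m) ℂ) (hVm : Vmᴴ * Vm = 1)
    (b x x0 : EuclideanSpace ℂ (Fin n)) (z : EuclideanSpace ℂ (Fin m))
    (σ : ℝ) (hσ : 0 < σ) (hz : ‖z‖ = 1)
    (hsv : Matrix.toEuclideanLin (Vmᴴ * Aᴴ * A * Vm) z = ((σ : ℂ) ^ 2) • z)
    (hx : Matrix.toEuclideanLin A x = b)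
    (hx0 : ∃ y : EuclideanSpace ℂ (Fin m), x - x0 = Matrix.toEuclideanLin Vm y)
    (α : ℂ)
    (hα : α = (inner ℂ (Matrix.toEuclideanLin A (Matrix.toEuclideanLin Vm z))
        (b - Matrix.toEuclideanLin A x0) : ℂ) /
      (‖Matrix.toEuclideanLin A (Matrix.toEuclideanLin Vm z)‖ : ℂ) ^ 2) :
    ∀ k : ℂ, ‖x - x0 - α • Matrix.toEuclideanLin Vm z‖ ≤
      ‖x - x0 - k • Matrix.toEuclideanLin Vm z‖ := by
  obtain ⟨y, hy⟩ := hx0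
  set u : EuclideanSpace ℂ (Fin n) := Matrix.toEuclideanLin Vm z with hu
  -- inner ℂ products through Vm are preserved
  have hVinner : ∀ a c : EuclideanSpace ℂ (Fin m),
      (inner ℂ (Matrix.toEuclideanLin Vm a) (Matrix.toEuclideanLin Vm c) : ℂ) = inner ℂ a c := by
    intro a c
    rw [inner_toEuclideanLin_left, ← toEuclideanLin_mul_apply, hVm]
    simp [Matrix.toEuclideanLin_apply]
  -- key: inner ℂ of AVm z with AVm w = σ^2 * inner ℂ z w
  have hAV : ∀ c : EuclideanSpace ℂ (Fin m),
      (inner ℂ (Matrix.toEuclideanLin A u) (Matrix.toEuclideanLin A (Matrix.toEuclideanLin Vm c)) : ℂ)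
        = (σ : ℂ) ^ 2 * inner ℂ z c := by
    intro c
    rw [hu, ← toEuclideanLin_mul_apply, ← toEuclideanLin_mul_apply,
      ← LinearMap.adjoint_inner_left, ← Matrix.toEuclideanLin_conjTranspose_eq_adjoint,
      ← toEuclideanLin_mul_apply]
    have : ((A * Vm)ᴴ * (A * Vm)) = Vmᴴ * Aᴴ * A * Vm := by
      simp [Matrix.conjTranspose_mul, Matrix.mul_assoc]
    rw [this, hsv, inner_smul_left]
    simp
  have hzz : (inner ℂ z z : ℂ) = 1 := by
    rw [inner_self_eq_norm_sq_to_K, hz]; norm_num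
  -- norm of AVm z squared = σ^2
  have hAVnorm : (‖Matrix.toEuclideanLin A u‖ : ℂ) ^ 2 = (σ : ℂ) ^ 2 := by
    have h1 : (inner ℂ (Matrix.toEuclideanLin A u) (Matrix.toEuclideanLin A u) : ℂ)
        = (σ : ℂ) ^ 2 := by rw [hu, hAV z, hzz, mul_one]
    rw [inner_self_eq_norm_sq_to_K] at h1
    simpa using h1
  have hσ2 : ((σ : ℂ) ^ 2) ≠ 0 := by
    simp [pow_eq_zero_iff]
    exact_mod_cast hσ.ne'
  -- α = inner ℂ u (x - x0)
  have hαe : α = inner ℂ u (x - x0) := by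
    have hbx0 : b - Matrix.toEuclideanLin A x0 = Matrix.toEuclideanLin A (x - x0) := by
      rw [← hx, ← map_sub]
    rw [hα, hbx0, hy, hAV y, hAVnorm, mul_div_assoc, mul_comm, div_mul_cancel₀ _ hσ2,
      ← hVinner z y, ← hu, ← hy]
  have hunorm : (inner ℂ u u : ℂ) = 1 := by rw [hu, hVinner, hzz]
  -- orthogonality
  have horth : ∀ k : ℂ, (inner ℂ ((α - k) • u) (x - x0 - α • u) : ℂ) = 0 := by
    intro k
    rw [inner_smul_left, inner_sub_right, inner_smul_right, hunorm, mul_one, ← hαe]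
    simp
  intro k
  have hdecomp : x - x0 - k • u = (x - x0 - α • u) + (α - k) • u := by
    module
  have hperp : (inner ℂ (x - x0 - α • u) ((α - k) • u) : ℂ) = 0 := by
    rw [← inner_conj_symm, horth k, map_zero]
  have key := norm_add_sq_eq_norm_sq_add_norm_sq_of_inner_eq_zero _ _ hperp
  have h2 : ‖x - x0 - α • u‖ ^ 2 ≤ ‖x - x0 - k • u‖ ^ 2 := by
    rw [hdecomp, pow_two, pow_two, key]
    nlinarith [mul_self_nonneg ‖(α - k) • u‖]
  nlinarith [norm_nonneg (x - x0 - α • u), norm_nonneg (x - x0 - k • u)]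
end

section
/- Let n, m, k be positive integers with m + k < n, let A be an n×n complex matrix, let Y_k be an n×k complex matrix, let r₀ ∈ ℂⁿ be nonzero with v = r₀/‖r₀‖, and let q be a polynomial of degree m with q(0) = 0. Suppose the n×(1+k) matrix U = (q(A)v, AY_k), whose first column is q(A)v and whose remaining columns are those of AY_k, has full column rank. Let r_s ∈ ℂⁿ be any vector of the form r_s = r₀ − y with y in the column space of U and satisfying ‖r_s‖ ≤ ‖r₀ − w‖ for all w in the column space of U. Then ‖r_s‖²/‖r₀‖² ≤ 1 − min over unit vectors w ∈ ℂⁿ of (|w*q(A)w|² + ‖w*AY_k‖²)/(‖q(A)‖² + ‖AY_k‖_F²), where ‖q(A)‖ is the spectral (operator 2-) norm of q(A) and ‖·‖_F is the Frobenius norm. -/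
open Matrix

/-- The Frobenius norm of a complex matrix. -/
noncomputable def frobeniusNorm {n k : ℕ} (M : Matrix (Fin n) (Fin k) ℂ) : ℝ :=
  Real.sqrt (∑ i, ∑ j, ‖M i j‖ ^ 2)

open scoped InnerProductSpace

lemma euclid_norm_sq {ι : Type*} [Fintype ι] (x : EuclideanSpace ℂ ι) :
    ‖x‖ ^ 2 = ∑ i, ‖x i‖ ^ 2 := by
  rw [EuclideanSpace.norm_eq, Real.sq_sqrt (by positivity)]

lemma row_bound {ι : Type*} [Fintype ι] (a : ι → ℂ) (x : EuclideanSpace ℂ ι) :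
    ‖∑ j, a j * x j‖ ^ 2 ≤ (∑ j, ‖a j‖ ^ 2) * ‖x‖ ^ 2 := by
  set w : EuclideanSpace ℂ ι := (WithLp.equiv 2 _).symm (fun j => star (a j)) with hw
  have h1 : ⟪w, x⟫_ℂ = ∑ j, a j * x j := by
    simp [PiLp.inner_apply, hw, RCLike.inner_apply]
    exact Finset.sum_congr rfl fun _ _ => mul_comm _ _
  have h2 : ‖w‖ ^ 2 = ∑ j, ‖a j‖ ^ 2 := by
    simp [euclid_norm_sq, hw]
  calc ‖∑ j, a j * x j‖ ^ 2 = ‖⟪w, x⟫_ℂ‖ ^ 2 := by rw [h1]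
    _ ≤ (‖w‖ * ‖x‖) ^ 2 := by
        have := norm_inner_le_norm (𝕜 := ℂ) w x
        have h0 : (0:ℝ) ≤ ‖⟪w, x⟫_ℂ‖ := norm_nonneg _
        nlinarith
    _ = (∑ j, ‖a j‖ ^ 2) * ‖x‖ ^ 2 := by rw [mul_pow, h2]

lemma aux_proj_bound {E F : Type*} [NormedAddCommGroup E] [InnerProductSpace ℂ E]
    [NormedAddCommGroup F] [InnerProductSpace ℂ F] [FiniteDimensional ℂ E] [FiniteDimensional ℂ F]
    (T : E →ₗ[ℂ] F) (r₀ rs : F) (C : ℝ) (hC : 0 < C)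
    (hT : ∀ x, ‖T x‖ ^ 2 ≤ C * ‖x‖ ^ 2)
    (hopt : ∀ c, ‖rs‖ ≤ ‖r₀ - T c‖) :
    ‖rs‖ ^ 2 ≤ ‖r₀‖ ^ 2 - ‖LinearMap.adjoint T r₀‖ ^ 2 / C := by
  classical
  set S := LinearMap.range T with hS
  set u : F := (S.orthogonalProjectionOnto r₀ : F) with hu
  obtain ⟨c₀, hc₀⟩ : ∃ c, T c = u := (S.orthogonalProjectionOnto r₀).2
  have hperp : ∀ w ∈ S, ⟪r₀ - u, w⟫_ℂ = 0 := fun w hw => Submodule.starProjection_inner_eq_zero (K := S) r₀ w hw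
  have hpyth : ‖r₀‖ ^ 2 = ‖u‖ ^ 2 + ‖r₀ - u‖ ^ 2 := by
    have h0 : ⟪u, r₀ - u⟫_ℂ = 0 := by
      rw [← inner_conj_symm, hperp u (S.orthogonalProjectionOnto r₀).2, map_zero]
    calc ‖r₀‖ ^ 2 = ‖u + (r₀ - u)‖ ^ 2 := by rw [add_sub_cancel]
      _ = ‖u‖ ^ 2 + ‖r₀ - u‖ ^ 2 := by
          have := norm_add_sq_eq_norm_sq_add_norm_sq_of_inner_eq_zero u (r₀ - u) h0
          simpa [sq] using this
  set c : E := LinearMap.adjoint T r₀ with hc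
  have hkey : ‖c‖ ^ 2 ≤ C * ‖u‖ ^ 2 := by
    have h1 : (⟪c, c⟫_ℂ) = ⟪u, T c⟫_ℂ := by
      rw [hc, LinearMap.adjoint_inner_left]
      have : ⟪r₀ - u, T c⟫_ℂ = 0 := hperp _ (LinearMap.mem_range_self T c)
      have h2 : ⟪r₀, T c⟫_ℂ = ⟪u, T c⟫_ℂ + ⟪r₀ - u, T c⟫_ℂ := by
        rw [← inner_add_left, add_sub_cancel]
      rw [h2, this, add_zero]
    have h3 : ‖c‖ ^ 2 = ‖⟪u, T c⟫_ℂ‖ := by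
      rw [← h1, inner_self_eq_norm_sq_to_K]
      simp [sq]
    have hTc : ‖T c‖ ≤ Real.sqrt C * ‖c‖ := by
      rw [← Real.sqrt_sq (norm_nonneg (T c))]
      calc Real.sqrt (‖T c‖ ^ 2) ≤ Real.sqrt (C * ‖c‖ ^ 2) := Real.sqrt_le_sqrt (hT c)
        _ = Real.sqrt C * ‖c‖ := by
            rw [Real.sqrt_mul hC.le, Real.sqrt_sq (norm_nonneg c)]
    have h4 : ‖c‖ ^ 2 ≤ ‖u‖ * (Real.sqrt C * ‖c‖) := by
      calc ‖c‖ ^ 2 = ‖⟪u, T c⟫_ℂ‖ := h3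
        _ ≤ ‖u‖ * ‖T c‖ := norm_inner_le_norm u (T c)
        _ ≤ ‖u‖ * (Real.sqrt C * ‖c‖) := mul_le_mul_of_nonneg_left hTc (norm_nonneg u)
    have h5 : ‖c‖ ≤ Real.sqrt C * ‖u‖ := by
      rcases eq_or_lt_of_le (norm_nonneg c) with h | h
      · rw [← h]; positivity
      · nlinarith [norm_nonneg u]
    nlinarith [Real.sq_sqrt hC.le, norm_nonneg u, norm_nonneg c, Real.sqrt_nonneg C]
  have hrs : ‖rs‖ ^ 2 ≤ ‖r₀ - u‖ ^ 2 := by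
    have := hopt c₀
    rw [hc₀] at this
    nlinarith [norm_nonneg rs, norm_nonneg (r₀ - u)]
  have : ‖c‖ ^ 2 / C ≤ ‖u‖ ^ 2 := by
    rw [div_le_iff₀ hC]; nlinarith
  nlinarith

set_option maxHeartbeats 1000000 in
/-- **Theorem 3.3.** Let `m + k < n`, let `r₀ ≠ 0` with `v = r₀ / ‖r₀‖`, and let `q` be a
polynomial of degree `m` with `q(0) = 0`.  Suppose the `n × (1 + k)` matrix
`U = (q(A) v, A Y_k)` has full column rank, and let `r_s = r₀ - y` with `y` in the column
space of `U` and `‖r_s‖ ≤ ‖r₀ - w‖` for every `w` in the column space of `U`.  Then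
`‖r_s‖² / ‖r₀‖² ≤ 1 - min_{‖w‖=1} (|wᴴ q(A) w|² + ‖wᴴ A Y_k‖²) / (‖q(A)‖² + ‖A Y_k‖_F²)`,
where `‖q(A)‖` is the spectral norm. -/
theorem gmres_sv_convergence_bound (n m k : ℕ) (hmk : m + k < n)
    (A : Matrix (Fin n) (Fin n) ℂ) (Y : Matrix (Fin n) (Fin k) ℂ)
    (r₀ : EuclideanSpace ℂ (Fin n)) (hr₀ : r₀ ≠ 0)
    (v : EuclideanSpace ℂ (Fin n)) (hv : v = (‖r₀‖⁻¹ : ℝ) • r₀)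
    (q : Polynomial ℂ) (hqdeg : q.natDegree = m) (hq0 : q.eval 0 = 0)
    (U : Matrix (Fin n) (Fin 1 ⊕ Fin k) ℂ)
    (hU : U = Matrix.fromCols
      (Matrix.replicateCol (Fin 1) ((Polynomial.aeval A q).mulVec v)) (A * Y))
    (hUrank : U.rank = 1 + k)
    (rs y : EuclideanSpace ℂ (Fin n)) (hrs : rs = r₀ - y)
    (hy : ∃ c : EuclideanSpace ℂ (Fin 1 ⊕ Fin k), y = Matrix.toEuclideanLin U c)
    (hopt : ∀ c : EuclideanSpace ℂ (Fin 1 ⊕ Fin k),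
      ‖rs‖ ≤ ‖r₀ - Matrix.toEuclideanLin U c‖) :
    ‖rs‖ ^ 2 / ‖r₀‖ ^ 2 ≤ 1 -
      ⨅ w : {w : EuclideanSpace ℂ (Fin n) // ‖w‖ = 1},
        (‖(inner ℂ (w : EuclideanSpace ℂ (Fin n))
              (Matrix.toEuclideanLin (Polynomial.aeval A q) w) : ℂ)‖ ^ 2 +
          ‖Matrix.toEuclideanLin (A * Y)ᴴ (w : EuclideanSpace ℂ (Fin n))‖ ^ 2) /
        (‖Matrix.toEuclideanCLM (𝕜 := ℂ) (Polynomial.aeval A q)‖ ^ 2 +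
          frobeniusNorm (A * Y) ^ 2) := by
  classical
  set qA : Matrix (Fin n) (Fin n) ℂ := Polynomial.aeval A q with hqA
  set C : ℝ := ∑ i, ∑ j, ‖U i j‖ ^ 2 with hCdef
  set D : ℝ := ‖Matrix.toEuclideanCLM (𝕜 := ℂ) qA‖ ^ 2 + frobeniusNorm (A * Y) ^ 2 with hDdef
  have hr₀pos : 0 < ‖r₀‖ := norm_pos_iff.mpr hr₀
  have hv1 : ‖v‖ = 1 := by
    rw [hv, norm_smul]
    simp [abs_of_pos (inv_pos.mpr hr₀pos), inv_mul_cancel₀ hr₀pos.ne']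
  set N : ℝ := ‖(⟪v, Matrix.toEuclideanLin qA v⟫_ℂ)‖ ^ 2 +
      ‖Matrix.toEuclideanLin (A * Y)ᴴ v‖ ^ 2 with hNdef
  have hr0v : r₀ = ((‖r₀‖ : ℂ)) • v := by
    rw [hv, ← Complex.coe_smul, smul_smul, ← Complex.ofReal_mul,
      mul_inv_cancel₀ hr₀pos.ne']
    simp
  have hCpos : 0 < C := by
    rcases lt_or_eq_of_le (show (0:ℝ) ≤ C from Finset.sum_nonneg fun i _ => Finset.sum_nonneg fun j _ => sq_nonneg _) with h | h
    · exact h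
    · exfalso
      have hz : ∀ i j, U i j = 0 := by
        intro i j
        have h1 : ∀ i ∈ Finset.univ, (0:ℝ) ≤ ∑ j, ‖U i j‖ ^ 2 := fun i _ => by positivity
        have h2 := (Finset.sum_eq_zero_iff_of_nonneg h1).mp h.symm i (Finset.mem_univ i)
        have h3 : ∀ j ∈ Finset.univ, (0:ℝ) ≤ ‖U i j‖ ^ 2 := fun j _ => by positivity
        have h4 := (Finset.sum_eq_zero_iff_of_nonneg h3).mp h2 j (Finset.mem_univ j)
        simpa using h4
      have hU0 : U = 0 := by
        ext i j; simpa using hz i j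
      rw [hU0, Matrix.rank_zero] at hUrank
      omega
  have hTb : ∀ x : EuclideanSpace ℂ (Fin 1 ⊕ Fin k),
      ‖Matrix.toEuclideanLin U x‖ ^ 2 ≤ C * ‖x‖ ^ 2 := by
    intro x
    rw [Matrix.toEuclideanLin_apply, euclid_norm_sq]
    have hterm : ∀ i, ‖((WithLp.equiv 2 ((Fin n) → ℂ)).symm
        (U *ᵥ (WithLp.equiv 2 _) x)) i‖ ^ 2 ≤ (∑ j, ‖U i j‖ ^ 2) * ‖x‖ ^ 2 := by
      intro i
      have : ((WithLp.equiv 2 ((Fin n) → ℂ)).symm (U *ᵥ (WithLp.equiv 2 _) x)) i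
          = ∑ j, U i j * x j := by
        simp [Matrix.mulVec, dotProduct]
      rw [this]
      exact row_bound (fun j => U i j) x
    calc ∑ i, ‖((WithLp.equiv 2 ((Fin n) → ℂ)).symm (U *ᵥ (WithLp.equiv 2 _) x)) i‖ ^ 2
        ≤ ∑ i : Fin n, (∑ j, ‖U i j‖ ^ 2) * ‖x‖ ^ 2 :=
          Finset.sum_le_sum (fun i _ => hterm i)
      _ = C * ‖x‖ ^ 2 := by rw [hCdef, Finset.sum_mul]
  have hadj : ‖LinearMap.adjoint (Matrix.toEuclideanLin U) r₀‖ ^ 2 = ‖r₀‖ ^ 2 * N := by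
    rw [← Matrix.toEuclideanLin_conjTranspose_eq_adjoint]
    have hAv : ‖(Matrix.toEuclideanLin Uᴴ) r₀‖ ^ 2
        = ‖r₀‖ ^ 2 * ‖(Matrix.toEuclideanLin Uᴴ) v‖ ^ 2 := by
      conv_lhs => rw [hr0v]
      rw [LinearMap.map_smul, norm_smul, mul_pow]
      norm_num
    rw [hAv]
    congr 1
    -- ‖toEuclideanLin Uᴴ v‖ ^ 2 = N
    rw [euclid_norm_sq, Fintype.sum_sum_type, hNdef]
    congr 1
    · -- inl part
      have h1 : ((Matrix.toEuclideanLin Uᴴ) v) (Sum.inl (0 : Fin 1))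
          = starRingEnd ℂ ⟪v, Matrix.toEuclideanLin qA v⟫_ℂ := by
        simp [Matrix.toEuclideanLin_apply, Matrix.mulVec, dotProduct,
          Matrix.conjTranspose_apply, hU, Matrix.fromCols_apply_inl, Matrix.replicateCol_apply,
          PiLp.inner_apply, RCLike.inner_apply, map_sum, mul_comm]
      rw [Finset.sum_eq_single (0 : Fin 1) (fun b _ hb => absurd (Subsingleton.elim b 0) hb)
        (fun h => absurd (Finset.mem_univ _) h), h1, RCLike.norm_conj]
    · -- inr part
      have h2 : ∀ b : Fin k, ((Matrix.toEuclideanLin Uᴴ) v) (Sum.inr b)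
          = ((Matrix.toEuclideanLin (A * Y)ᴴ) v) b := by
        intro b
        simp only [Matrix.toEuclideanLin_apply, Matrix.mulVec, dotProduct,
          Matrix.conjTranspose_apply, hU, Matrix.fromCols_apply_inr]
      rw [euclid_norm_sq]
      exact Finset.sum_congr rfl (fun b _ => by rw [h2 b])
  have hCD : C ≤ D := by
    have hsplit : C = (∑ i, ‖U i (Sum.inl 0)‖ ^ 2) + ∑ i, ∑ j, ‖U i (Sum.inr j)‖ ^ 2 := by
      rw [hCdef, ← Finset.sum_add_distrib]
      refine Finset.sum_congr rfl (fun i _ => ?_)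
      rw [Fintype.sum_sum_type]
      congr 1
      rw [Finset.sum_eq_single (0 : Fin 1) (fun b _ hb => absurd (Subsingleton.elim b 0) hb)
        (fun h => absurd (Finset.mem_univ _) h)]
    have hfrob : ∑ i, ∑ j, ‖U i (Sum.inr j)‖ ^ 2 = frobeniusNorm (A * Y) ^ 2 := by
      rw [frobeniusNorm, Real.sq_sqrt (by positivity)]
      refine Finset.sum_congr rfl (fun i _ => Finset.sum_congr rfl (fun j _ => ?_))
      rw [hU, Matrix.fromCols_apply_inr]
    have hqAv : (∑ i, ‖U i (Sum.inl 0)‖ ^ 2) ≤ ‖Matrix.toEuclideanCLM (𝕜 := ℂ) qA‖ ^ 2 := by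
      have he : (∑ i, ‖U i (Sum.inl 0)‖ ^ 2)
          = ‖Matrix.toEuclideanCLM (𝕜 := ℂ) qA v‖ ^ 2 := by
        have : (Matrix.toEuclideanCLM (𝕜 := ℂ) qA) v = (Matrix.toEuclideanLin qA) v := by
          rw [← Matrix.coe_toEuclideanCLM_eq_toEuclideanLin]; rfl
        rw [this, euclid_norm_sq]
        refine Finset.sum_congr rfl (fun i _ => ?_)
        rw [hU, Matrix.fromCols_apply_inl, Matrix.replicateCol_apply, Matrix.toEuclideanLin_apply]
      rw [he]
      have := (Matrix.toEuclideanCLM (𝕜 := ℂ) qA).le_opNorm v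
      rw [hv1, mul_one] at this
      have h0 := norm_nonneg ((Matrix.toEuclideanCLM (𝕜 := ℂ) qA) v)
      nlinarith
    rw [hsplit, hDdef, hfrob]
    linarith
  have hNnn : 0 ≤ N := by positivity
  have hDpos : 0 < D := lt_of_lt_of_le hCpos hCD
  have hmain : ‖rs‖ ^ 2 ≤ ‖r₀‖ ^ 2 - (‖r₀‖ ^ 2 * N) / C := by
    have := aux_proj_bound (Matrix.toEuclideanLin U) r₀ rs C hCpos hTb hopt
    rwa [hadj] at this
  have hmain2 : ‖rs‖ ^ 2 ≤ ‖r₀‖ ^ 2 - (‖r₀‖ ^ 2 * N) / D := by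
    have hdiv : (‖r₀‖ ^ 2 * N) / D ≤ (‖r₀‖ ^ 2 * N) / C :=
      div_le_div_of_nonneg_left (by positivity) hCpos hCD
    linarith
  have hInf : (⨅ w : {w : EuclideanSpace ℂ (Fin n) // ‖w‖ = 1},
        (‖(⟪(w : EuclideanSpace ℂ (Fin n)),
              Matrix.toEuclideanLin qA w⟫_ℂ)‖ ^ 2 +
          ‖Matrix.toEuclideanLin (A * Y)ᴴ (w : EuclideanSpace ℂ (Fin n))‖ ^ 2) / D) ≤ N / D := by
    have hb : BddBelow (Set.range fun w : {w : EuclideanSpace ℂ (Fin n) // ‖w‖ = 1} =>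
        (‖(⟪(w : EuclideanSpace ℂ (Fin n)), Matrix.toEuclideanLin qA w⟫_ℂ)‖ ^ 2 +
          ‖Matrix.toEuclideanLin (A * Y)ᴴ (w : EuclideanSpace ℂ (Fin n))‖ ^ 2) / D) := by
      refine ⟨0, fun x hx => ?_⟩
      obtain ⟨w, rfl⟩ := hx
      positivity
    exact ciInf_le hb ⟨v, hv1⟩
  rw [div_le_iff₀ (by positivity : (0:ℝ) < ‖r₀‖ ^ 2)]
  have h1N : ‖rs‖ ^ 2 ≤ (1 - N / D) * ‖r₀‖ ^ 2 := by
    have : ‖r₀‖ ^ 2 - (‖r₀‖ ^ 2 * N) / D = (1 - N / D) * ‖r₀‖ ^ 2 := by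
      field_simp
    linarith [hmain2, this.symm.le]
  refine le_trans h1N ?_
  have : (1 : ℝ) - N / D ≤ 1 - ⨅ w : {w : EuclideanSpace ℂ (Fin n) // ‖w‖ = 1},
        (‖(⟪(w : EuclideanSpace ℂ (Fin n)), Matrix.toEuclideanLin qA w⟫_ℂ)‖ ^ 2 +
          ‖Matrix.toEuclideanLin (A * Y)ᴴ (w : EuclideanSpace ℂ (Fin n))‖ ^ 2) / D := by
    linarith [hInf]
  exact mul_le_mul_of_nonneg_right this (by positivity)
end
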